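/- Two-point function of the grand canonical measure: Fix ρ ∈ (1/2,1). For ℓ ≥ 1 define the two-point function P_ℓ = Σ W_ρ^{ℓ+1}(σ), where the sum runs over all σ ∈ {0,1}^{Λ_{ℓ+1}} with σ(1) = σ(ℓ+1) = 1. Then P_ℓ = ρ² + (2ρ−1−ρ²)(1−1/ρ)^{ℓ−1} for all ℓ ≥ 1; in particular there exist constants C = C(ρ) > 0 and q = q(ρ) > 0 such that |P_ℓ − ρ²| ≤ q·e^{−Cℓ} for all ℓ ≥ 1. -/

import Mathlib

open scoped BigOperators
open scoped Classical

namespace FEP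

/-- The number of particles of `σ` in `Λ_ℓ = {1,…,ℓ}`. -/
def pcount (ℓ : ℕ) (σ : ℕ → Bool) : ℕ :=
  ∑ x ∈ Finset.Icc 1 ℓ, (if σ x then 1 else 0)

/-- `σ` has no two adjacent empty sites in `Λ_ℓ`. -/
def noAdj (ℓ : ℕ) (σ : ℕ → Bool) : Prop :=
  ∀ x ∈ Finset.Ico 1 ℓ, (σ x = true ∨ σ (x + 1) = true)

/-- The cylinder weight `W_ρ^ℓ(σ)` of the infinite-volume grand canonical measure `π_ρ`. -/
noncomputable def W (ρ : ℝ) (ℓ : ℕ) (σ : ℕ → Bool) : ℝ :=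
  if ∀ x ∈ Finset.Ico 1 ℓ, (σ x = true ∨ σ (x + 1) = true) then
    (1 - ρ) * ((1 - ρ) / ρ) ^ ((ℓ : ℤ) - 1 - (pcount ℓ σ : ℤ)) *
      ((2 * ρ - 1) / ρ) ^
        (2 * (pcount ℓ σ : ℤ) - (ℓ : ℤ) + 1 - (if σ 1 then 1 else 0) -
          (if σ ℓ then 1 else 0))
  else 0

/-- Extension of a configuration on `Λ_L` (indexed by `Fin L`, site `i` of `Λ_L` being
`⟨i-1,_⟩`) to a configuration `ℕ → Bool`. -/
def extSeg (L : ℕ) (σ : Fin L → Bool) : ℕ → Bool :=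
  fun x => if h : 1 ≤ x ∧ x ≤ L then σ ⟨x - 1, by omega⟩ else false

end FEP

namespace FEP

/-- The two-point function `P_ℓ = π_ρ(ξ(0) = ξ(ℓ) = 1)`, written as a sum of cylinder weights
on `Λ_{ℓ+1}` over the configurations with particles at both endpoints. -/
noncomputable def Pfun (ρ : ℝ) (ℓ : ℕ) : ℝ :=
  ∑ σ : Fin (ℓ + 1) → Bool,
    if extSeg (ℓ + 1) σ 1 = true ∧ extSeg (ℓ + 1) σ (ℓ + 1) = true then
      W ρ (ℓ + 1) (extSeg (ℓ + 1) σ)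
    else 0

/-- Transfer-matrix edge weight. -/
noncomputable def m (ρ : ℝ) (t u : Bool) : ℝ :=
  if t then (if u then (2 * ρ - 1) / ρ else 1) else (if u then (1 - ρ) / ρ else 0)

lemma W_eq (ρ : ℝ) (hρ : ρ ∈ Set.Ioo (1/2 : ℝ) 1) :
    ∀ L : ℕ, 1 ≤ L → ∀ σ : ℕ → Bool,
      W ρ L σ = (1 - ρ) * (if σ L then ρ / (1 - ρ) else 1) *
        ∏ x ∈ Finset.Ico 1 L, m ρ (σ x) (σ (x + 1)) := by
  obtain ⟨hρ1, hρ2⟩ := hρ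
  have hρ0 : (0:ℝ) < ρ := by linarith
  have h1ρ : (0:ℝ) < 1 - ρ := by linarith
  have h2ρ : (0:ℝ) < 2 * ρ - 1 := by linarith
  have hρ0' : (ρ:ℝ) ≠ 0 := ne_of_gt hρ0
  have h1ρ' : (1 - ρ:ℝ) ≠ 0 := ne_of_gt h1ρ
  have ha : ((1 - ρ) / ρ : ℝ) ≠ 0 := by positivity
  have hb : ((2 * ρ - 1) / ρ : ℝ) ≠ 0 := by positivity
  intro L hL
  induction L, hL using Nat.le_induction with
  | base =>
    intro σ
    have hp : pcount 1 σ = if σ 1 then 1 else 0 := by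
      rw [pcount, Finset.Icc_self, Finset.sum_singleton]
    rw [W, if_pos (by simp), hp]
    cases h1 : σ 1 <;>
      simp [h1, Finset.Ico_self, zpow_neg] <;> field_simp
  | succ L hL ih =>
    intro σ
    have hins : Finset.Ico 1 (L + 1) = insert L (Finset.Ico 1 L) :=
      Nat.Ico_succ_right_eq_insert_Ico hL
    have hpc : (pcount (L + 1) σ : ℤ) = (pcount L σ : ℤ) + (if σ (L+1) then 1 else 0) := by
      have := Finset.sum_Icc_succ_top (f := fun x => if σ x then (1:ℕ) else 0)
        (a := 1) (b := L) (by omega)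
      simp only [pcount, this]
      push_cast
      cases h : σ (L+1) <;> simp
    have hLn : L ∉ Finset.Ico 1 L := by simp
    rw [hins, Finset.prod_insert hLn]
    set Q := ∏ x ∈ Finset.Ico 1 L, m ρ (σ x) (σ (x + 1)) with hQdef
    by_cases hno : ∀ x ∈ Finset.Ico 1 L, (σ x = true ∨ σ (x + 1) = true)
    · have hWL := ih σ
      rw [W, if_pos hno, ← hQdef] at hWL
      by_cases hedge : σ L = true ∨ σ (L + 1) = true
      · have hcond : ∀ x ∈ Finset.Ico 1 (L+1), (σ x = true ∨ σ (x + 1) = true) := by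
          intro x hx
          rw [hins, Finset.mem_insert] at hx
          rcases hx with h | h
          · subst h; exact hedge
          · exact hno x h
        rw [W, if_pos hcond, hpc]
        push_cast
        set E1 : ℤ := (L : ℤ) - 1 - (pcount L σ : ℤ) with hE1
        set s1 : ℤ := (if σ 1 then 1 else 0) with hs1
        cases hL1 : σ L <;> cases hL2 : σ (L+1) <;>
          simp only [hL1, hL2, Bool.false_eq_true, if_true, if_false, ite_true,
            ite_false, mul_one, sub_zero, add_zero] at hedge hWL ⊢ <;>
          simp only [m, Bool.false_eq_true, if_true, if_false, ite_true, ite_false]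
        · exact absurd hedge (by simp)
        · -- (0,1)
          rw [show ((L:ℤ) + 1 - 1 - ((pcount L σ : ℤ) + 1)) = E1 by rw [hE1]; ring,
            show (2 * ((pcount L σ : ℤ) + 1) - ((L:ℤ) + 1) + 1 - s1 - 1)
              = (2 * (pcount L σ : ℤ) - (L:ℤ) + 1 - s1) by ring,
            hWL]
          field_simp
        · -- (1,0)
          rw [show ((L:ℤ) + 1 - 1 - (pcount L σ : ℤ)) = E1 + 1 by rw [hE1]; ring,
            show (2 * (pcount L σ : ℤ) - ((L:ℤ) + 1) + 1 - s1)
              = (2 * (pcount L σ : ℤ) - (L:ℤ) + 1 - s1 - 1) by ring,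
            zpow_add_one₀ ha,
            show (1 - ρ) * (((1-ρ)/ρ) ^ E1 * ((1-ρ)/ρ)) *
                ((2*ρ-1)/ρ) ^ (2 * (pcount L σ : ℤ) - (L:ℤ) + 1 - s1 - 1)
              = ((1 - ρ) * ((1-ρ)/ρ) ^ E1 *
                ((2*ρ-1)/ρ) ^ (2 * (pcount L σ : ℤ) - (L:ℤ) + 1 - s1 - 1)) * ((1-ρ)/ρ) by ring,
            hWL]
          field_simp
        · -- (1,1)
          rw [show ((L:ℤ) + 1 - 1 - ((pcount L σ : ℤ) + 1)) = E1 by rw [hE1]; ring,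
            show (2 * ((pcount L σ : ℤ) + 1) - ((L:ℤ) + 1) + 1 - s1 - 1)
              = (2 * (pcount L σ : ℤ) - (L:ℤ) + 1 - s1 - 1) + 1 by ring,
            zpow_add_one₀ hb,
            show (1 - ρ) * ((1-ρ)/ρ) ^ E1 *
                (((2*ρ-1)/ρ) ^ (2 * (pcount L σ : ℤ) - (L:ℤ) + 1 - s1 - 1) * ((2*ρ-1)/ρ))
              = ((1 - ρ) * ((1-ρ)/ρ) ^ E1 *
                ((2*ρ-1)/ρ) ^ (2 * (pcount L σ : ℤ) - (L:ℤ) + 1 - s1 - 1)) * ((2*ρ-1)/ρ) by ring,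
            hWL]
          ring
      · rw [W, if_neg (by
          intro hall
          exact hedge (hall L (by rw [hins]; exact Finset.mem_insert_self _ _)))]
        have hm : m ρ (σ L) (σ (L+1)) = 0 := by
          push_neg at hedge
          simp [m, hedge.1, hedge.2]
        rw [hm]; ring
    · have hcond : ¬ ∀ x ∈ Finset.Ico 1 (L+1), (σ x = true ∨ σ (x + 1) = true) := by
        intro hall
        exact hno fun x hx => hall x (by rw [hins]; exact Finset.mem_insert_of_mem hx)
      rw [W, if_neg hcond]
      have hWL := ih σ
      rw [W, if_neg hno] at hWL
      have hfac : (1 - ρ) * (if σ L then ρ / (1 - ρ) else 1) ≠ 0 := by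
        cases hσL : σ L <;> simp only [hσL, Bool.false_eq_true, if_true, if_false,
          ite_true, ite_false, mul_one]
        · exact h1ρ'
        · exact mul_ne_zero h1ρ' (div_ne_zero hρ0' h1ρ')
      have hprod : Q = 0 := by
        rcases mul_eq_zero.mp hWL.symm with h' | h'
        · exact absurd h' hfac
        · exact h'
      rw [hprod]; ring

/-- The constrained partition sum with left endpoint occupied and right endpoint in state `c`. -/
noncomputable def Sfun (ρ : ℝ) (c : Bool) (ℓ : ℕ) : ℝ :=
  ∑ σ : Fin (ℓ + 1) → Bool,
    if extSeg (ℓ + 1) σ 1 = true ∧ extSeg (ℓ + 1) σ (ℓ + 1) = c then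
      ∏ x ∈ Finset.Ico 1 (ℓ + 1), m ρ (extSeg (ℓ + 1) σ x) (extSeg (ℓ + 1) σ (x + 1))
    else 0

lemma extSeg_snoc (ℓ : ℕ) (τ : Fin (ℓ + 1) → Bool) (c : Bool) (x : ℕ)
    (h1 : 1 ≤ x) (h2 : x ≤ ℓ + 1) :
    extSeg (ℓ + 1 + 1) (Fin.snoc τ c) x = extSeg (ℓ + 1) τ x := by
  rw [extSeg, extSeg, dif_pos ⟨h1, by omega⟩, dif_pos ⟨h1, h2⟩]
  have : (⟨x - 1, by omega⟩ : Fin (ℓ + 1 + 1)) = Fin.castSucc ⟨x - 1, by omega⟩ := rfl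
  rw [this, Fin.snoc_castSucc]

lemma extSeg_snoc_last (ℓ : ℕ) (τ : Fin (ℓ + 1) → Bool) (c : Bool) :
    extSeg (ℓ + 1 + 1) (Fin.snoc τ c) (ℓ + 1 + 1) = c := by
  rw [extSeg, dif_pos ⟨by omega, le_refl _⟩]
  have : (⟨ℓ + 1 + 1 - 1, by omega⟩ : Fin (ℓ + 1 + 1)) = Fin.last (ℓ + 1) := rfl
  rw [this, Fin.snoc_last]

lemma Sfun_zero (ρ : ℝ) (c : Bool) : Sfun ρ c 0 = if c then 1 else 0 := by
  rw [Sfun]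
  rw [Fintype.sum_equiv (Equiv.funUnique (Fin 1) Bool)
    (fun σ => if extSeg 1 σ 1 = true ∧ extSeg 1 σ 1 = c then
      ∏ x ∈ Finset.Ico 1 1, m ρ (extSeg 1 σ x) (extSeg 1 σ (x + 1)) else 0)
    (fun b => if b = true ∧ b = c then 1 else 0)
    (by
      intro σ
      simp only [Finset.Ico_self, Finset.prod_empty, Equiv.funUnique_apply]
      have : extSeg 1 σ 1 = σ 0 := by
        rw [extSeg, dif_pos ⟨le_refl _, le_refl _⟩]; rfl
      rw [this]; rfl)]
  rw [Fintype.sum_bool]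
  cases c <;> simp

lemma Sfun_succ (ρ : ℝ) (c : Bool) (ℓ : ℕ) :
    Sfun ρ c (ℓ + 1) =
      m ρ true c * Sfun ρ true ℓ + m ρ false c * Sfun ρ false ℓ := by
  rw [Sfun]
  set F : (Fin (ℓ + 1 + 1) → Bool) → ℝ := fun σ =>
    if extSeg (ℓ + 1 + 1) σ 1 = true ∧ extSeg (ℓ + 1 + 1) σ (ℓ + 1 + 1) = c then
      ∏ x ∈ Finset.Ico 1 (ℓ + 1 + 1), m ρ (extSeg (ℓ + 1 + 1) σ x) (extSeg (ℓ + 1 + 1) σ (x + 1))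
    else 0 with hF
  have heq : (∑ σ : Fin (ℓ + 1 + 1) → Bool, F σ)
      = ∑ p : (Fin (ℓ + 1) → Bool) × Bool, F (Fin.snoc p.1 p.2) :=
    (Fintype.sum_equiv
      ⟨fun p => Fin.snoc p.1 p.2, fun σ => (Fin.init σ, σ (Fin.last (ℓ + 1))),
        fun p => by simp, fun σ => by simp⟩
      (fun p => F (Fin.snoc p.1 p.2)) F (fun p => rfl)).symm
  rw [heq, Fintype.sum_prod_type]
  have key : ∀ τ : Fin (ℓ + 1) → Bool,
      (∑ c' : Bool, F (Fin.snoc τ c')) =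
        m ρ true c *
          (if extSeg (ℓ + 1) τ 1 = true ∧ extSeg (ℓ + 1) τ (ℓ + 1) = true then
            ∏ x ∈ Finset.Ico 1 (ℓ + 1), m ρ (extSeg (ℓ + 1) τ x) (extSeg (ℓ + 1) τ (x + 1))
          else 0) +
        m ρ false c *
          (if extSeg (ℓ + 1) τ 1 = true ∧ extSeg (ℓ + 1) τ (ℓ + 1) = false then
            ∏ x ∈ Finset.Ico 1 (ℓ + 1), m ρ (extSeg (ℓ + 1) τ x) (extSeg (ℓ + 1) τ (x + 1))
          else 0) := by
    intro τ
    have h1 : ∀ c', extSeg (ℓ + 1 + 1) (Fin.snoc τ c') 1 = extSeg (ℓ + 1) τ 1 :=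
      fun c' => extSeg_snoc ℓ τ c' 1 le_rfl (by omega)
    have hlast : ∀ c', extSeg (ℓ + 1 + 1) (Fin.snoc τ c') (ℓ + 1 + 1) = c' :=
      fun c' => extSeg_snoc_last ℓ τ c'
    have hprod : ∀ c',
        ∏ x ∈ Finset.Ico 1 (ℓ + 1 + 1),
            m ρ (extSeg (ℓ + 1 + 1) (Fin.snoc τ c') x)
              (extSeg (ℓ + 1 + 1) (Fin.snoc τ c') (x + 1))
        = m ρ (extSeg (ℓ + 1) τ (ℓ + 1)) c' *
          ∏ x ∈ Finset.Ico 1 (ℓ + 1), m ρ (extSeg (ℓ + 1) τ x) (extSeg (ℓ + 1) τ (x + 1)) := by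
      intro c'
      rw [Nat.Ico_succ_right_eq_insert_Ico (by omega), Finset.prod_insert (by simp)]
      rw [extSeg_snoc ℓ τ c' (ℓ + 1) (by omega) le_rfl, hlast c']
      congr 1
      apply Finset.prod_congr rfl
      intro x hx
      rw [Finset.mem_Ico] at hx
      rw [extSeg_snoc ℓ τ c' x hx.1 (by omega),
        extSeg_snoc ℓ τ c' (x + 1) (by omega) (by omega)]
    rw [Fintype.sum_bool, hF]
    simp only [h1, hlast, hprod]
    cases hc : c <;> cases h1v : extSeg (ℓ + 1) τ 1 <;>
      cases hlv : extSeg (ℓ + 1) τ (ℓ + 1) <;>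
      simp [h1v, hlv, m]
  rw [Finset.sum_congr rfl (fun τ _ => key τ), Finset.sum_add_distrib,
    ← Finset.mul_sum, ← Finset.mul_sum, Sfun, Sfun]

lemma Pfun_eq (ρ : ℝ) (hρ : ρ ∈ Set.Ioo (1/2 : ℝ) 1) (ℓ : ℕ) :
    Pfun ρ ℓ = ρ * Sfun ρ true ℓ := by
  have h1ρ' : (1 - ρ:ℝ) ≠ 0 := by
    have := hρ.2; intro h; nlinarith [hρ.1]
  rw [Pfun, Sfun, Finset.mul_sum]
  apply Finset.sum_congr rfl
  intro σ _
  by_cases h : extSeg (ℓ + 1) σ 1 = true ∧ extSeg (ℓ + 1) σ (ℓ + 1) = true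
  · rw [if_pos h, if_pos h, W_eq ρ hρ (ℓ + 1) (by omega), h.2, if_pos rfl]
    field_simp
  · rw [if_neg h, if_neg h, mul_zero]

lemma Sfun_true_closed (ρ : ℝ) (hρ : ρ ∈ Set.Ioo (1/2 : ℝ) 1) :
    ∀ n : ℕ,
      Sfun ρ true (n + 1) = ρ + (2 * ρ - 1 - ρ ^ 2) / ρ * (1 - 1 / ρ) ^ n ∧
      Sfun ρ true (n + 2) = ρ + (2 * ρ - 1 - ρ ^ 2) / ρ * (1 - 1 / ρ) ^ (n + 1) := by
  obtain ⟨hρ1, hρ2⟩ := hρ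
  have hρ0 : (0:ℝ) < ρ := by linarith
  have hρ0' : (ρ:ℝ) ≠ 0 := ne_of_gt hρ0
  have hB : ∀ k : ℕ, Sfun ρ false (k + 1) = Sfun ρ true k := by
    intro k
    rw [Sfun_succ]
    simp [m]
  have hrec : ∀ k : ℕ, Sfun ρ true (k + 2) =
      (2 * ρ - 1) / ρ * Sfun ρ true (k + 1) + (1 - ρ) / ρ * Sfun ρ true k := by
    intro k
    rw [show k + 2 = (k + 1) + 1 by ring, Sfun_succ, hB k]
    simp [m]
  have hS0 : Sfun ρ true 0 = 1 := by rw [Sfun_zero]; simp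
  have hS1 : Sfun ρ true 1 = (2 * ρ - 1) / ρ := by
    have h01 := Sfun_succ ρ true 0
    simp only [zero_add] at h01
    rw [h01, Sfun_zero, Sfun_zero]
    simp [m]
  intro n
  induction n with
  | zero =>
    constructor
    · rw [hS1]; field_simp; ring
    · rw [show (0:ℕ) + 2 = 0 + 2 by rfl, hrec 0, hS1, hS0]
      simp only [zero_add, pow_one]; field_simp; ring
  | succ n ih =>
    obtain ⟨ih1, ih2⟩ := ih
    refine ⟨ih2, ?_⟩
    rw [show n + 1 + 2 = n + 3 by ring, show n + 3 = (n + 1) + 2 by ring,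
      hrec (n + 1), ih2, ih1]
    rw [show (1 - 1/ρ) ^ (n + 1 + 1) = (1 - 1/ρ) ^ n * (1 - 1/ρ) ^ 2 by ring,
      show (1 - 1/ρ) ^ (n + 1) = (1 - 1/ρ) ^ n * (1 - 1/ρ) by ring]
    field_simp
    ring

/-- **Two-point function of the grand canonical measure:** explicit formula and exponential
decay of correlations. -/
theorem two_point_function (ρ : ℝ) (hρ : ρ ∈ Set.Ioo (1/2 : ℝ) 1) :
    (∀ ℓ : ℕ, 1 ≤ ℓ →
      Pfun ρ ℓ = ρ ^ 2 + (2 * ρ - 1 - ρ ^ 2) * (1 - 1 / ρ) ^ (ℓ - 1)) ∧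
    ∃ C q : ℝ, 0 < C ∧ 0 < q ∧
      ∀ ℓ : ℕ, 1 ≤ ℓ → |Pfun ρ ℓ - ρ ^ 2| ≤ q * Real.exp (-C * ℓ) := by
  obtain ⟨hρ1, hρ2⟩ := hρ
  have hρ0 : (0:ℝ) < ρ := by linarith
  have hρ0' : (ρ:ℝ) ≠ 0 := ne_of_gt hρ0
  have hmain : ∀ ℓ : ℕ, 1 ≤ ℓ →
      Pfun ρ ℓ = ρ ^ 2 + (2 * ρ - 1 - ρ ^ 2) * (1 - 1 / ρ) ^ (ℓ - 1) := by
    intro ℓ hℓ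
    obtain ⟨n, rfl⟩ : ∃ n, ℓ = n + 1 := ⟨ℓ - 1, by omega⟩
    rw [Pfun_eq ρ ⟨hρ1, hρ2⟩, (Sfun_true_closed ρ ⟨hρ1, hρ2⟩ n).1,
      show n + 1 - 1 = n by omega]
    field_simp
  refine ⟨hmain, ?_⟩
  set t : ℝ := 1 / ρ - 1 with ht
  have ht0 : 0 < t := by
    rw [ht]
    have : 1 < 1 / ρ := one_lt_one_div hρ0 hρ2
    linarith
  have ht1 : t < 1 := by
    rw [ht]
    have : 1 / ρ < 2 := by
      rw [div_lt_iff₀ hρ0]; linarith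
    linarith
  have hlog : Real.log t < 0 := Real.log_neg ht0 ht1
  refine ⟨-Real.log t, (1 - ρ) ^ 2 / t, by linarith,
    div_pos (pow_pos (by linarith) 2) ht0, ?_⟩
  intro ℓ hℓ
  obtain ⟨n, rfl⟩ : ∃ n, ℓ = n + 1 := ⟨ℓ - 1, by omega⟩
  rw [hmain (n + 1) (by omega), show n + 1 - 1 = n by omega]
  have habs : |ρ ^ 2 + (2 * ρ - 1 - ρ ^ 2) * (1 - 1 / ρ) ^ n - ρ ^ 2|
      = (1 - ρ) ^ 2 * t ^ n := by
    rw [show ρ ^ 2 + (2 * ρ - 1 - ρ ^ 2) * (1 - 1 / ρ) ^ n - ρ ^ 2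
        = (2 * ρ - 1 - ρ ^ 2) * (1 - 1 / ρ) ^ n by ring]
    rw [abs_mul, show (2 * ρ - 1 - ρ ^ 2) = -((1 - ρ) ^ 2) by ring, abs_neg,
      abs_of_nonneg (sq_nonneg _), show (1 - 1 / ρ) = -t by rw [ht]; ring,
      abs_pow, abs_neg, abs_of_pos ht0]
  rw [habs]
  apply le_of_eq
  have hexp : Real.exp (-(-Real.log t) * ((n + 1 : ℕ) : ℝ)) = t ^ (n + 1) := by
    rw [neg_neg, mul_comm, Real.exp_nat_mul, Real.exp_log ht0]
  rw [hexp, pow_succ]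
  field_simp
  ring

end FEP
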